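/- Let P₁, P₂ : 𝔤* → 𝔤 both be skew and 𝔥-invariant on 𝔥°, and suppose they induce the same bivector on 𝔤/𝔥, i.e. ξ(P₁ η) = ξ(P₂ η) for all η, ξ ∈ 𝔥°. Then for all η, ξ, ε ∈ 𝔥°: ε(P₁([η, ξ]_{P₁}) − [P₁ η, P₁ ξ]) = ε(P₂([η, ξ]_{P₂}) − [P₂ η, P₂ ξ]). (In other words the tensor ⟦r, r⟧ depends only on the induced bivector r on 𝔤/𝔥, not on the chosen lift.) -/

import Mathlib

/-- The annihilator `𝔥° ⊆ 𝔤*` of a Lie subalgebra `𝔥` of `𝔤`. -/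
def inAnn {L : Type*} [LieRing L] [LieAlgebra ℝ L] (H : LieSubalgebra ℝ L)
    (η : Module.Dual ℝ L) : Prop :=
  ∀ x ∈ H, η x = 0

/-- The `𝔥`-invariant elements `(𝔥°)^𝔥` of the annihilator. -/
def inAnnInv {L : Type*} [LieRing L] [LieAlgebra ℝ L] (H : LieSubalgebra ℝ L)
    (η : Module.Dual ℝ L) : Prop :=
  inAnn H η ∧ ∀ u ∈ H, ∀ v : L, η ⁅u, v⁆ = 0

/-- A linear map `P : 𝔤* → 𝔤` is skew: `ξ(Pη) = -η(Pξ)`. -/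
def IsSkewMap {L : Type*} [LieRing L] [LieAlgebra ℝ L]
    (P : Module.Dual ℝ L →ₗ[ℝ] L) : Prop :=
  ∀ η ξ : Module.Dual ℝ L, ξ (P η) = - η (P ξ)

/-- The functional `η ∘ ad u : v ↦ η([u,v])`. -/
def adDual {L : Type*} [LieRing L] [LieAlgebra ℝ L] (u : L)
    (η : Module.Dual ℝ L) : Module.Dual ℝ L :=
  η ∘ₗ LieAlgebra.ad ℝ L u

/-- `P` is `𝔥`-invariant on `𝔥°`. -/
def IsInvOnAnn {L : Type*} [LieRing L] [LieAlgebra ℝ L] (H : LieSubalgebra ℝ L)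
    (P : Module.Dual ℝ L →ₗ[ℝ] L) : Prop :=
  ∀ u ∈ H, ∀ η ξ : Module.Dual ℝ L, inAnn H η → inAnn H ξ →
    ξ (P (adDual u η)) + ξ ⁅u, P η⁆ = 0

/-- `[η, ξ]_P : v ↦ η([Pξ, v]) - ξ([Pη, v])`. -/
def bracketP {L : Type*} [LieRing L] [LieAlgebra ℝ L]
    (P : Module.Dual ℝ L →ₗ[ℝ] L) (η ξ : Module.Dual ℝ L) : Module.Dual ℝ L :=
  η ∘ₗ LieAlgebra.ad ℝ L (P ξ) - ξ ∘ₗ LieAlgebra.ad ℝ L (P η)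

/-- `P` satisfies the Yang–Baxter equation of the pair `(𝔤, 𝔥)`. -/
def IsYB {L : Type*} [LieRing L] [LieAlgebra ℝ L] (H : LieSubalgebra ℝ L)
    (P : Module.Dual ℝ L →ₗ[ℝ] L) : Prop :=
  ∀ η ξ ε : Module.Dual ℝ L, inAnn H η → inAnn H ξ → inAnn H ε →
    ε (P (bracketP P η ξ) - ⁅P η, P ξ⁆) = 0

/-- The set `𝔞_P = {x : x - Pη ∈ 𝔥 for some η ∈ 𝔥°}`. -/
def aP {L : Type*} [LieRing L] [LieAlgebra ℝ L] (H : LieSubalgebra ℝ L)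
    (P : Module.Dual ℝ L →ₗ[ℝ] L) : Set L :=
  {x | ∃ η : Module.Dual ℝ L, inAnn H η ∧ x - P η ∈ H}

lemma annih_mem {L : Type*} [LieRing L] [LieAlgebra ℝ L]
    (H : LieSubalgebra ℝ L) (x : L) (h : ∀ φ : Module.Dual ℝ L, inAnn H φ → φ x = 0) :
    x ∈ H := by
  rw [← LieSubalgebra.mem_toSubmodule,
    ← Subspace.forall_mem_dualAnnihilator_apply_eq_zero_iff]
  intro φ hφ
  rw [Submodule.mem_dualAnnihilator] at hφ
  exact h φ (fun y hy => hφ y hy)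

lemma skew_apply {L : Type*} [LieRing L] [LieAlgebra ℝ L]
    (φ : Module.Dual ℝ L) (a b : L) : φ ⁅a, b⁆ = - φ ⁅b, a⁆ := by
  rw [← lie_skew b a, map_neg, neg_neg]

lemma bracketP_ann {L : Type*} [LieRing L] [LieAlgebra ℝ L]
    (H : LieSubalgebra ℝ L) (P : Module.Dual ℝ L →ₗ[ℝ] L)
    (hskew : IsSkewMap P) (hinv : IsInvOnAnn H P)
    (η ξ : Module.Dual ℝ L) (hη : inAnn H η) (hξ : inAnn H ξ) :
    inAnn H (bracketP P η ξ) := by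
  intro x hx
  have h1 := hinv x hx η ξ hη hξ
  have h2 : (adDual x η) (P ξ) = - ξ (P (adDual x η)) := by
    rw [hskew (adDual x η) ξ]; ring
  simp only [bracketP, LinearMap.sub_apply, LinearMap.comp_apply,
    LieAlgebra.ad_apply] at *
  have h3 : η ⁅P ξ, x⁆ = - (adDual x η) (P ξ) := by
    rw [skew_apply η (P ξ) x]
    simp [adDual, LieAlgebra.ad_apply]
  have h4 : ξ ⁅P η, x⁆ = - ξ ⁅x, P η⁆ := skew_apply ξ (P η) x
  rw [h3, h2, h4]
  linarith

theorem yb_tensor_independent_of_lift {L : Type*} [LieRing L] [LieAlgebra ℝ L]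
    [FiniteDimensional ℝ L]
    (H : LieSubalgebra ℝ L) (P₁ P₂ : Module.Dual ℝ L →ₗ[ℝ] L)
    (hskew₁ : IsSkewMap P₁) (hskew₂ : IsSkewMap P₂)
    (hinv₁ : IsInvOnAnn H P₁) (hinv₂ : IsInvOnAnn H P₂)
    (hsame : ∀ η ξ : Module.Dual ℝ L, inAnn H η → inAnn H ξ → ξ (P₁ η) = ξ (P₂ η)) :
    ∀ η ξ ε : Module.Dual ℝ L, inAnn H η → inAnn H ξ → inAnn H ε →
      ε (P₁ (bracketP P₁ η ξ) - ⁅P₁ η, P₁ ξ⁆) =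
        ε (P₂ (bracketP P₂ η ξ) - ⁅P₂ η, P₂ ξ⁆) := by
  intro η ξ ε hη hξ hε
  set u := P₁ η - P₂ η with hu_def
  set w := P₁ ξ - P₂ ξ with hw_def
  have hu : u ∈ H := annih_mem H u (by
    intro φ hφ
    simp [hu_def, map_sub, hsame η φ hη hφ])
  have hw : w ∈ H := annih_mem H w (by
    intro φ hφ
    simp [hw_def, map_sub, hsame ξ φ hξ hφ])
  have hb₁ := bracketP_ann H P₁ hskew₁ hinv₁ η ξ hη hξ
  have e1 : ε (P₁ (bracketP P₁ η ξ)) = ε (P₂ (bracketP P₁ η ξ)) :=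
    hsame _ ε hb₁ hε
  have e2 : bracketP P₁ η ξ = bracketP P₂ η ξ + adDual w η - adDual u ξ := by
    ext v
    simp only [bracketP, adDual, LinearMap.sub_apply, LinearMap.add_apply,
      LinearMap.comp_apply, LieAlgebra.ad_apply, hu_def, hw_def, sub_lie,
      map_sub]
    ring
  have e3 : ε (P₂ (adDual w η)) = - ε ⁅w, P₂ η⁆ := by
    have := hinv₂ w hw η ε hη hε; linarith
  have e4 : ε (P₂ (adDual u ξ)) = - ε ⁅u, P₂ ξ⁆ := by
    have := hinv₂ u hu ξ ε hξ hε; linarith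
  have e6 : ε ⁅u, w⁆ = 0 := hε _ (H.lie_mem hu hw)
  have e7 : ε ⁅P₁ η, P₁ ξ⁆ =
      ε ⁅P₂ η, P₂ ξ⁆ + ε ⁅P₂ η, w⁆ + ε ⁅u, P₂ ξ⁆ + ε ⁅u, w⁆ := by
    have h1 : P₁ η = P₂ η + u := by rw [hu_def]; abel
    have h2 : P₁ ξ = P₂ ξ + w := by rw [hw_def]; abel
    rw [h1, h2]
    simp only [add_lie, lie_add, map_add]
    ring
  have e8 : ε ⁅P₂ η, w⁆ = - ε ⁅w, P₂ η⁆ := skew_apply ε (P₂ η) w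
  have e9 : ε (P₂ (bracketP P₁ η ξ)) =
      ε (P₂ (bracketP P₂ η ξ)) + ε (P₂ (adDual w η)) - ε (P₂ (adDual u ξ)) := by
    rw [e2]; simp [map_add, map_sub]
  simp only [map_sub]
  rw [e1, e9, e3, e4, e7, e8, e6]
  ring
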